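/- Let v : ℝⁿ → ℝᵐ be an affine 1-Lipschitz map, let x₁, …, x_k ∈ ℝⁿ, let u₁, …, u_k ∈ ℝᵐ satisfy ‖uᵢ − uⱼ‖ ≤ ‖xᵢ − xⱼ‖ for all i, j = 1, …, k, and let x ∈ ℝⁿ. Then there exists p ∈ ℝᵐ such that ‖p − uᵢ‖ ≤ ‖x − xᵢ‖ for all i = 1, …, k and p − v(x) lies in the convex hull of {u₁ − v(x₁), …, u_k − v(x_k)}. -/

import Mathlib

open Finset in
private lemma aux_sum_norm_sq {E : Type*} [NormedAddCommGroup E] [InnerProductSpace ℝ E]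
    {k : ℕ} (l : Fin k → ℝ) (hl : ∑ j, l j = 1) (a : E) (b : Fin k → E) :
    ∑ j, l j * ‖a - b j‖ ^ 2
      = ‖a - ∑ j, l j • b j‖ ^ 2 + (∑ j, l j * ‖b j‖ ^ 2 - ‖∑ j, l j • b j‖ ^ 2) := by
  have hS : (inner ℝ a (∑ j, l j • b j) : ℝ) = ∑ j, l j * inner ℝ a (b j) := by
    rw [inner_sum]; exact Finset.sum_congr rfl fun j _ => real_inner_smul_right a (b j) (l j)
  have expand : ∀ j : Fin k, l j * ‖a - b j‖ ^ 2
      = ‖a‖ ^ 2 * l j - 2 * (l j * inner ℝ a (b j)) + l j * ‖b j‖ ^ 2 := by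
    intro j
    rw [norm_sub_sq_real]; ring
  rw [Finset.sum_congr rfl fun j _ => expand j, Finset.sum_add_distrib,
    Finset.sum_sub_distrib, ← Finset.mul_sum, ← Finset.mul_sum, hl, ← hS,
    norm_sub_sq_real]
  ring


private lemma aux_double_sum {E : Type*} [NormedAddCommGroup E] [InnerProductSpace ℝ E]
    {k : ℕ} (l : Fin k → ℝ) (hl : ∑ j, l j = 1) (b : Fin k → E) :
    ∑ i, ∑ j, l i * l j * ‖b i - b j‖ ^ 2
      = 2 * (∑ j, l j * ‖b j‖ ^ 2) - 2 * ‖∑ j, l j • b j‖ ^ 2 := by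
  have hSS : ‖∑ j, l j • b j‖ ^ 2 = ∑ i, ∑ j, l i * l j * inner ℝ (b i) (b j) := by
    rw [← real_inner_self_eq_norm_sq, sum_inner]
    refine Finset.sum_congr rfl fun i _ => ?_
    rw [real_inner_smul_left, inner_sum, Finset.mul_sum]
    refine Finset.sum_congr rfl fun j _ => ?_
    rw [real_inner_smul_right]; ring
  have key : ∀ (c : Fin k → ℝ), ∑ i, ∑ j, l i * l j * c i = ∑ i, l i * c i := by
    intro c
    refine Finset.sum_congr rfl fun i _ => ?_
    calc ∑ j, l i * l j * c i = (∑ j, l j) * (l i * c i) := by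
          rw [Finset.sum_mul]; exact Finset.sum_congr rfl fun j _ => by ring
      _ = l i * c i := by rw [hl, one_mul]
  have key2 : ∑ i, ∑ j, l i * l j * ‖b j‖ ^ 2 = ∑ j, l j * ‖b j‖ ^ 2 := by
    rw [Finset.sum_comm]
    calc ∑ j, ∑ i, l i * l j * ‖b j‖ ^ 2 = ∑ j, ∑ i, l j * l i * ‖b j‖ ^ 2 := by
          exact Finset.sum_congr rfl fun j _ => Finset.sum_congr rfl fun i _ => by ring
      _ = ∑ j, l j * ‖b j‖ ^ 2 := key _
  have expand : ∀ i j : Fin k, l i * l j * ‖b i - b j‖ ^ 2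
      = l i * l j * ‖b i‖ ^ 2 + l i * l j * ‖b j‖ ^ 2 - 2 * (l i * l j * inner ℝ (b i) (b j)) := by
    intro i j; rw [norm_sub_sq_real]; ring
  calc ∑ i, ∑ j, l i * l j * ‖b i - b j‖ ^ 2
      = ∑ i, ∑ j, (l i * l j * ‖b i‖ ^ 2 + l i * l j * ‖b j‖ ^ 2
          - 2 * (l i * l j * inner ℝ (b i) (b j))) :=
        Finset.sum_congr rfl fun i _ => Finset.sum_congr rfl fun j _ => expand i j
    _ = (∑ i, ∑ j, l i * l j * ‖b i‖ ^ 2) + (∑ i, ∑ j, l i * l j * ‖b j‖ ^ 2)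
          - 2 * (∑ i, ∑ j, l i * l j * inner ℝ (b i) (b j)) := by
        simp [Finset.sum_add_distrib, Finset.sum_sub_distrib, Finset.mul_sum]
    _ = 2 * (∑ j, l j * ‖b j‖ ^ 2) - 2 * ‖∑ j, l j • b j‖ ^ 2 := by
        rw [hSS.symm, key (fun i => ‖b i‖ ^ 2), key2]; ring

private lemma aux_norm_combo {E : Type*} [NormedAddCommGroup E] [InnerProductSpace ℝ E]
    (t s : ℝ) (ht : 0 ≤ t) (hs : 0 ≤ s) (hts : t + s = 1) (a b : E) :
    ‖t • a + s • b‖ ^ 2 ≤ t * ‖a‖ ^ 2 + s * ‖b‖ ^ 2 := by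
  have h1 : ‖t • a + s • b‖ ^ 2
      = t^2 * ‖a‖^2 + 2 * (t * s * inner ℝ a b) + s^2 * ‖b‖^2 := by
    rw [norm_add_sq_real, norm_smul, norm_smul, real_inner_smul_left, real_inner_smul_right]
    simp [abs_of_nonneg ht, abs_of_nonneg hs]
    ring
  have h2 : (inner ℝ a b : ℝ) ≤ ‖a‖ * ‖b‖ := real_inner_le_norm a b
  nlinarith [sq_nonneg (‖a‖ - ‖b‖), mul_nonneg ht hs, sq_nonneg (t*s)]


private lemma aux_affine {n m : ℕ} (v : EuclideanSpace ℝ (Fin n) → EuclideanSpace ℝ (Fin m))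
    (hvaff : ∀ x y : EuclideanSpace ℝ (Fin n), ∀ t ∈ Set.Icc (0 : ℝ) 1,
      v (t • x + (1 - t) • y) = t • v x + (1 - t) • v y)
    (hvlip : ∀ x y : EuclideanSpace ℝ (Fin n), ‖v x - v y‖ ≤ ‖x - y‖)
    {k : ℕ} (l : Fin k → ℝ) (hl : ∑ j, l j = 1) (x : Fin k → EuclideanSpace ℝ (Fin n)) :
    v (∑ j, l j • x j) = ∑ j, l j • v (x j) := by
  have hcont : Continuous v := by
    have : LipschitzWith 1 v := by
      refine LipschitzWith.of_dist_le_mul fun a b => ?_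
      rw [dist_eq_norm, dist_eq_norm, NNReal.coe_one, one_mul]
      exact hvlip a b
    exact this.continuous
  have hmid : ∀ a b : EuclideanSpace ℝ (Fin n),
      v (midpoint ℝ a b) = midpoint ℝ (v a) (v b) := by
    intro a b
    have h := hvaff a b (1/2) (by norm_num)
    rw [midpoint_eq_smul_add, midpoint_eq_smul_add]
    norm_num at h ⊢
    exact h
  set V := AffineMap.ofMapMidpoint v hmid hcont with hV
  have hVv : ∀ z, V z = v z := fun z => by
    rw [hV]; rfl
  have h1 : v (Finset.univ.affineCombination ℝ x l)
      = Finset.univ.affineCombination ℝ (v ∘ x) l := by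
    rw [← hVv, Finset.map_affineCombination Finset.univ x l hl V]
    rfl
  rwa [Finset.affineCombination_eq_linear_combination _ _ _ hl,
    Finset.affineCombination_eq_linear_combination _ _ _ hl] at h1


private lemma aux_sep {k : ℕ} (hk : 0 < k) (f : Fin k → (Fin k → ℝ) → ℝ)
    (hconv : ∀ (j : Fin k), ∀ l l' : Fin k → ℝ, ∀ t s : ℝ, 0 ≤ t → 0 ≤ s → t + s = 1 →
      f j (t • l + s • l') ≤ t * f j l + s * f j l')
    (hdiag : ∀ l ∈ stdSimplex ℝ (Fin k), ∑ j, l j * f j l ≤ 0)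
    (ε : ℝ) (hε : 0 < ε) :
    ∃ l ∈ stdSimplex ℝ (Fin k), ∀ j, f j l ≤ ε := by
  by_contra hcon
  push_neg at hcon
  set D := stdSimplex ℝ (Fin k) with hD
  set C : Set (Fin k → ℝ) := {z | ∃ l ∈ D, ∀ j, f j l ≤ z j} with hC
  set O : Set (Fin k → ℝ) := ⋂ j, {z : Fin k → ℝ | z j < ε} with hO
  have hmemO : ∀ z : Fin k → ℝ, z ∈ O ↔ ∀ j, z j < ε := by
    intro z; simp [hO, Set.mem_iInter]
  have hCconv : Convex ℝ C := by
    rintro z ⟨l, hl, hfl⟩ z' ⟨l', hl', hfl'⟩ t s ht hs hts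
    refine ⟨t • l + s • l', (convex_stdSimplex ℝ (Fin k)) hl hl' ht hs hts, fun j => ?_⟩
    have h1 := hconv j l l' t s ht hs hts
    have h2 : t * f j l + s * f j l' ≤ t * z j + s * z' j :=
      add_le_add (mul_le_mul_of_nonneg_left (hfl j) ht)
        (mul_le_mul_of_nonneg_left (hfl' j) hs)
    have h3 : (t • z + s • z') j = t * z j + s * z' j := by
      simp [Pi.add_apply, Pi.smul_apply, smul_eq_mul]
    rw [h3]; linarith
  have hOconv : Convex ℝ O :=
    convex_iInter fun j => convex_halfSpace_lt ⟨fun _ _ => rfl, fun _ _ => rfl⟩ ε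
  have hOopen : IsOpen O :=
    isOpen_iInter_of_finite fun j => isOpen_lt (continuous_apply j) continuous_const
  have hdisj : Disjoint O C := by
    rw [Set.disjoint_left]
    rintro z hzO ⟨l, hl, hfl⟩
    obtain ⟨j, hj⟩ := hcon l hl
    exact absurd (lt_of_le_of_lt (hfl j) ((hmemO z).1 hzO j)) (not_lt.2 hj.le)
  obtain ⟨φ, c, hφO, hφC⟩ := geometric_hahn_banach_open hOconv hOopen hCconv hdisj
  set e : Fin k → (Fin k → ℝ) := fun j i => if i = j then (1:ℝ) else 0 with he
  set ξ : Fin k → ℝ := fun j => φ (e j) with hξ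
  have hrep : ∀ z : Fin k → ℝ, φ z = ∑ j, z j * ξ j := by
    intro z
    have hz : z = ∑ j, z j • e j := by
      funext i
      simp [he, Finset.sum_apply, Pi.smul_apply, smul_eq_mul]
    conv_lhs => rw [hz]
    rw [map_sum]
    exact Finset.sum_congr rfl fun j _ => by rw [map_smul]; rfl
  -- base point
  have hkne : (k : ℝ) ≠ 0 := Nat.cast_ne_zero.2 hk.ne'
  set l₀ : Fin k → ℝ := fun _ => (k : ℝ)⁻¹ with hl₀
  have hl₀D : l₀ ∈ D := by
    constructor
    · intro i; positivity
    · simp [hl₀, Finset.sum_const, Finset.card_univ]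
      exact mul_inv_cancel₀ hkne
  set z₀ : Fin k → ℝ := fun j => f j l₀ with hz₀
  have hz₀C : z₀ ∈ C := ⟨l₀, hl₀D, fun j => le_refl _⟩
  have hφz₀ : c ≤ φ z₀ := hφC z₀ hz₀C
  -- nonnegativity of ξ
  have hξnn : ∀ j, 0 ≤ ξ j := by
    intro j
    by_contra hneg
    push_neg at hneg
    set t : ℝ := (φ z₀ - c + 1) / (-ξ j) with hts
    have ht : 0 < t := div_pos (by linarith) (by linarith)
    have hmem : z₀ + t • e j ∈ C := by
      refine ⟨l₀, hl₀D, fun i => ?_⟩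
      have : 0 ≤ t * e j i := by
        apply mul_nonneg ht.le
        simp only [he]
        split <;> norm_num
      simp only [Pi.add_apply, Pi.smul_apply, smul_eq_mul]
      have : f i l₀ ≤ z₀ i := le_refl _
      linarith
    have hval : φ (z₀ + t • e j) = φ z₀ + t * ξ j := by
      rw [map_add, map_smul]; rfl
    have htξ : t * ξ j = -(φ z₀ - c + 1) := by
      have hne : -ξ j ≠ 0 := ne_of_gt (by linarith)
      rw [hts, div_mul_eq_mul_div, div_eq_iff hne]
      ring
    have := hφC _ hmem
    rw [hval, htξ] at this
    linarith
  set Ξ : ℝ := ∑ j, ξ j with hΞ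
  have hΞnn : 0 ≤ Ξ := Finset.sum_nonneg fun j _ => hξnn j
  have hΞpos : 0 < Ξ := by
    rcases hΞnn.lt_or_eq with h | h
    · exact h
    · exfalso
      have hall : ∀ j ∈ Finset.univ, ξ j = 0 :=
        (Finset.sum_eq_zero_iff_of_nonneg fun j _ => hξnn j).1 h.symm
      have hφ0 : ∀ z, φ z = 0 := by
        intro z
        rw [hrep]
        exact Finset.sum_eq_zero fun j _ => by rw [hall j (Finset.mem_univ j), mul_zero]
      have ha : (fun _ => ε - 1 : Fin k → ℝ) ∈ O := (hmemO _).2 fun j => by norm_num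
      have h1 := hφO _ ha
      rw [hφ0] at h1
      have h2 := hφC z₀ hz₀C
      rw [hφ0] at h2
      linarith
  have hc : ε * Ξ ≤ c := by
    by_contra hlt
    push_neg at hlt
    set δ : ℝ := (ε * Ξ - c) / Ξ with hδ
    have hδpos : 0 < δ := div_pos (by linarith) hΞpos
    have ha : (fun _ => ε - δ : Fin k → ℝ) ∈ O := (hmemO _).2 fun j => by linarith
    have h1 := hφO _ ha
    rw [hrep] at h1
    have h2 : ∑ j, (ε - δ) * ξ j = (ε - δ) * Ξ := by rw [hΞ, Finset.mul_sum]
    rw [h2] at h1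
    have h3 : (ε - δ) * Ξ = c := by
      rw [hδ, sub_mul, div_mul_cancel₀ _ hΞpos.ne']
      ring
    linarith
  -- the normalized functional
  set lam : Fin k → ℝ := fun j => ξ j / Ξ with hlam
  have hlamD : lam ∈ D := by
    constructor
    · intro i; exact div_nonneg (hξnn i) hΞnn
    · rw [hlam]
      simp only
      rw [← Finset.sum_div, ← hΞ, div_self hΞpos.ne']
  have hzC : (fun j => f j lam) ∈ C := ⟨lam, hlamD, fun j => le_refl _⟩
  have h1 := hφC _ hzC
  rw [hrep] at h1
  have h2 : ∑ j, lam j * f j lam = (∑ j, f j lam * ξ j) / Ξ := by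
    rw [Finset.sum_div]
    exact Finset.sum_congr rfl fun j _ => by rw [hlam]; ring
  have h3 := hdiag lam hlamD
  rw [h2] at h3
  have h4 : ∑ j, f j lam * ξ j ≤ 0 := by
    have := (div_nonpos_iff.1 h3)
    rcases this with ⟨_, h⟩ | ⟨h, _⟩
    · linarith
    · exact h
  have : (0:ℝ) < ε * Ξ := mul_pos hε hΞpos
  linarith

theorem stmt_18 (n m k : ℕ) (hk : 0 < k)
    (v : EuclideanSpace ℝ (Fin n) → EuclideanSpace ℝ (Fin m))
    (hvaff : ∀ x y : EuclideanSpace ℝ (Fin n), ∀ t ∈ Set.Icc (0 : ℝ) 1,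
      v (t • x + (1 - t) • y) = t • v x + (1 - t) • v y)
    (hvlip : ∀ x y : EuclideanSpace ℝ (Fin n), ‖v x - v y‖ ≤ ‖x - y‖)
    (x : Fin k → EuclideanSpace ℝ (Fin n))
    (u : Fin k → EuclideanSpace ℝ (Fin m))
    (hu : ∀ i j, ‖u i - u j‖ ≤ ‖x i - x j‖)
    (x₀ : EuclideanSpace ℝ (Fin n)) :
    ∃ p : EuclideanSpace ℝ (Fin m),
      (∀ i, ‖p - u i‖ ≤ ‖x₀ - x i‖) ∧
      p - v x₀ ∈ convexHull ℝ (Set.range fun i => u i - v (x i)) := by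
  classical
  set c : Fin k → EuclideanSpace ℝ (Fin m) := fun i => u i - v (x i) with hc
  set P : (Fin k → ℝ) → EuclideanSpace ℝ (Fin m) := fun l => v x₀ + ∑ i, l i • c i with hP
  set f : Fin k → (Fin k → ℝ) → ℝ :=
    fun j l => ‖P l - u j‖ ^ 2 - ‖x₀ - x j‖ ^ 2 with hf
  -- P is affine in l
  have hPaff : ∀ (l l' : Fin k → ℝ) (t s : ℝ), t + s = 1 →
      P (t • l + s • l') = t • P l + s • P l' := by
    intro l l' t s hts
    have h1 : ∑ i, ((t • l + s • l') i) • c i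
        = t • (∑ i, l i • c i) + s • (∑ i, l' i • c i) := by
      rw [Finset.smul_sum, Finset.smul_sum, ← Finset.sum_add_distrib]
      refine Finset.sum_congr rfl fun i _ => ?_
      simp only [Pi.add_apply, Pi.smul_apply, smul_eq_mul, add_smul, smul_smul]
    have h2 : t • v x₀ + s • v x₀ = v x₀ := by
      rw [← add_smul, hts, one_smul]
    simp only [hP, smul_add, h1]
    conv_lhs => rw [← h2]
    abel
  -- convexity of f j
  have hconv : ∀ (j : Fin k), ∀ l l' : Fin k → ℝ, ∀ t s : ℝ, 0 ≤ t → 0 ≤ s → t + s = 1 →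
      f j (t • l + s • l') ≤ t * f j l + s * f j l' := by
    intro j l l' t s ht hs hts
    have h1 : P (t • l + s • l') - u j = t • (P l - u j) + s • (P l' - u j) := by
      rw [hPaff l l' t s hts, smul_sub, smul_sub]
      have h2 : t • u j + s • u j = u j := by rw [← add_smul, hts, one_smul]
      conv_lhs => rw [← h2]
      abel
    have h3 := aux_norm_combo t s ht hs hts (P l - u j) (P l' - u j)
    simp only [hf]
    rw [h1]
    nlinarith [h3]
  -- the diagonal inequality
  have hdiag : ∀ l ∈ stdSimplex ℝ (Fin k), ∑ j, l j * f j l ≤ 0 := by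
    intro l hl
    obtain ⟨hlnn, hlsum⟩ := hl
    have hA := aux_sum_norm_sq l hlsum (P l) u
    have hB := aux_sum_norm_sq l hlsum x₀ x
    have hDu := aux_double_sum l hlsum u
    have hDx := aux_double_sum l hlsum x
    -- termwise comparison of double sums
    have hterm : ∑ i, ∑ j, l i * l j * ‖u i - u j‖ ^ 2
        ≤ ∑ i, ∑ j, l i * l j * ‖x i - x j‖ ^ 2 := by
      refine Finset.sum_le_sum fun i _ => Finset.sum_le_sum fun j _ => ?_
      exact mul_le_mul_of_nonneg_left
        (pow_le_pow_left₀ (norm_nonneg _) (hu i j) 2)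
        (mul_nonneg (hlnn i) (hlnn j))
    -- P l - ū = v x₀ - v x̄
    have hpu : P l - ∑ j, l j • u j = v x₀ - v (∑ j, l j • x j) := by
      rw [aux_affine v hvaff hvlip l hlsum x]
      have : ∑ i, l i • c i = (∑ i, l i • u i) - ∑ i, l i • v (x i) := by
        rw [← Finset.sum_sub_distrib]
        exact Finset.sum_congr rfl fun i _ => by rw [hc, smul_sub]
      simp only [hP, this]
      abel
    have hlipsq : ‖P l - ∑ j, l j • u j‖ ^ 2 ≤ ‖x₀ - ∑ j, l j • x j‖ ^ 2 := by
      rw [hpu]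
      exact pow_le_pow_left₀ (norm_nonneg _) (hvlip x₀ _) 2
    have hsum : ∑ j, l j * f j l
        = ∑ j, l j * ‖P l - u j‖ ^ 2 - ∑ j, l j * ‖x₀ - x j‖ ^ 2 := by
      rw [← Finset.sum_sub_distrib]
      exact Finset.sum_congr rfl fun j _ => by simp only [hf]; ring
    rw [hsum, hA, hB]
    linarith
  -- continuity of f j
  have hPcont : Continuous P := by
    apply Continuous.add continuous_const
    exact continuous_finset_sum _ fun i _ => (continuous_apply i).smul continuous_const
  have hfcont : ∀ j, Continuous (f j) :=
    fun j => ((hPcont.sub continuous_const).norm.pow 2).sub continuous_const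
  -- nested compact sets
  set S : ℕ → Set (Fin k → ℝ) :=
    fun N => stdSimplex ℝ (Fin k) ∩ ⋂ j, {l | f j l ≤ 1 / (N + 1)} with hS
  have hSne : ∀ N, (S N).Nonempty := by
    intro N
    obtain ⟨l, hlD, hlf⟩ := aux_sep hk f hconv hdiag (1 / (N + 1)) (by positivity)
    exact ⟨l, hlD, Set.mem_iInter.2 fun j => hlf j⟩
  have hScl : ∀ N, IsClosed (S N) :=
    fun N => (isClosed_stdSimplex ℝ (Fin k)).inter
      (isClosed_iInter fun j => isClosed_le (hfcont j) continuous_const)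
  have hSc : IsCompact (S 0) :=
    (isCompact_stdSimplex ℝ (Fin k)).of_isClosed_subset (hScl 0) Set.inter_subset_left
  have hSdec : ∀ N, S (N + 1) ⊆ S N := by
    intro N
    rintro l ⟨hlD, hlf⟩
    refine ⟨hlD, Set.mem_iInter.2 fun j => ?_⟩
    have h1 := Set.mem_iInter.1 hlf j
    simp only [Set.mem_setOf_eq] at h1 ⊢
    have h2 : (1 : ℝ) / (N + 1 + 1) ≤ 1 / (N + 1) := by
      apply one_div_le_one_div_of_le (by positivity)
      linarith
    push_cast at h1
    linarith
  obtain ⟨l, hl⟩ :=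
    IsCompact.nonempty_iInter_of_sequence_nonempty_isCompact_isClosed S hSdec hSne hSc hScl
  have hlD : l ∈ stdSimplex ℝ (Fin k) := (Set.mem_iInter.1 hl 0).1
  have hlf : ∀ j, f j l ≤ 0 := by
    intro j
    have key : ∀ ε : ℝ, 0 < ε → f j l ≤ 0 + ε := by
      intro ε hε
      obtain ⟨N, hN⟩ := exists_nat_one_div_lt hε
      have := Set.mem_iInter.1 (Set.mem_iInter.1 hl N).2 j
      rw [zero_add]
      exact le_trans this (by exact_mod_cast hN.le)
    exact le_of_forall_pos_le_add key
  refine ⟨P l, fun j => ?_, ?_⟩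
  · have := hlf j
    simp only [hf] at this
    exact le_of_pow_le_pow_left₀ two_ne_zero (norm_nonneg _) (by linarith)
  · have h1 : P l - v x₀ = ∑ i, l i • c i := by
      simp only [hP]; abel
    rw [h1]
    exact (convex_convexHull ℝ _).sum_mem
      (fun i _ => hlD.1 i) hlD.2
      (fun i _ => subset_convexHull ℝ _ ⟨i, rfl⟩)
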